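/- arXiv:1703.06075 — 6 statements merged into one kernel-verified Lean document; each statement's English description precedes it below -/
import Mathlib

section
/- Let f : ℕ → ℝ be a real sequence and let m, n, q, N be positive integers with N ≥ q and q even. Then Σ_{k=1}^{N} (−1)^{k−1} ( [f(nk) − f(nk + mnq)] · Π_{j=1}^{m−1} f(nk + jnq) ) = Σ_{k=1}^{q} (−1)^{k−1} Π_{j=0}^{m−1} f(nk + jnq) + (−1)^{N−1} Σ_{k=1}^{q} (−1)^{k−1} Π_{j=0}^{m−1} f(nk + nN + jnq). -/
/-- Alternating telescoping summation identity (Lemma 2, `q` even). -/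
theorem stmt_1 (f : ℕ → ℝ) (m n q N : ℕ) (hm : 0 < m) (hn : 0 < n) (hq : 0 < q)
    (hN : 0 < N) (hNq : q ≤ N) (hqeven : Even q) :
    ∑ k ∈ Finset.Icc 1 N, (-1 : ℝ) ^ (k - 1) *
        ((f (n * k) - f (n * k + m * n * q)) * ∏ j ∈ Finset.Icc 1 (m - 1), f (n * k + j * n * q))
      = ∑ k ∈ Finset.Icc 1 q, (-1 : ℝ) ^ (k - 1) * ∏ j ∈ Finset.range m, f (n * k + j * n * q)
        + (-1 : ℝ) ^ (N - 1) *
          ∑ k ∈ Finset.Icc 1 q, (-1 : ℝ) ^ (k - 1) *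
            ∏ j ∈ Finset.range m, f (n * k + n * N + j * n * q) := by
  set g : ℕ → ℝ := fun k => (-1 : ℝ) ^ (k - 1) * ∏ j ∈ Finset.range m, f (n * k + j * n * q)
    with hg
  -- step 1: termwise identity
  have hterm : ∀ k ∈ Finset.Icc 1 N, (-1 : ℝ) ^ (k - 1) *
      ((f (n * k) - f (n * k + m * n * q)) * ∏ j ∈ Finset.Icc 1 (m - 1), f (n * k + j * n * q))
      = g k - g (k + q) := by
    intro k hk
    simp only [Finset.mem_Icc] at hk
    have hIcc : Finset.Icc 1 (m - 1) = Finset.Ico 1 m := by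
      ext x; simp [Finset.mem_Icc, Finset.mem_Ico]; omega
    have hp1 : ∏ j ∈ Finset.range m, f (n * k + j * n * q)
        = f (n * k) * ∏ j ∈ Finset.Ico 1 m, f (n * k + j * n * q) := by
      rw [Finset.range_eq_Ico, Finset.prod_eq_prod_Ico_succ_bot hm]
      simp
    have hp2 : ∏ j ∈ Finset.range m, f (n * (k + q) + j * n * q)
        = (∏ j ∈ Finset.Ico 1 m, f (n * k + j * n * q)) * f (n * k + m * n * q) := by
      have : ∀ j, n * (k + q) + j * n * q = n * k + (j + 1) * n * q := by intro j; ring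
      simp only [this]
      rw [show (∏ j ∈ Finset.range m, f (n * k + (j + 1) * n * q))
          = ∏ j ∈ Finset.Ico 1 (m + 1), f (n * k + j * n * q) by
        rw [Finset.prod_Ico_eq_prod_range]
        simp only [Nat.add_sub_cancel]
        apply Finset.prod_congr rfl
        intro j _; congr 2; ring]
      rw [Finset.prod_Ico_succ_top hm]
    have hsgn : (-1 : ℝ) ^ (k + q - 1) = (-1 : ℝ) ^ (k - 1) := by
      rw [show k + q - 1 = (k - 1) + q by omega, pow_add, Even.neg_one_pow hqeven, mul_one]
    simp only [hg, hsgn, hp1, hp2, hIcc]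
    ring
  rw [Finset.sum_congr rfl hterm]
  -- step 2: telescoping
  have hIoc : ∀ a b : ℕ, Finset.Icc (a + 1) b = Finset.Ioc a b := by
    intro a b; ext x; simp [Finset.mem_Icc, Finset.mem_Ioc]
  have hshift : ∑ k ∈ Finset.Icc 1 N, g (k + q) = ∑ k ∈ Finset.Ioc q (N + q), g k := by
    rw [← hIoc, show Finset.Icc (q + 1) (N + q) = (Finset.Icc 1 N).map
      (addRightEmbedding q) by rw [Finset.map_add_right_Icc]; congr 1 <;> omega,
      Finset.sum_map]
    rfl
  rw [Finset.sum_sub_distrib, hshift, show Finset.Icc 1 N = Finset.Ioc 0 N from hIoc 0 N]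
  have h1 : ∑ k ∈ Finset.Ioc 0 q, g k + ∑ k ∈ Finset.Ioc q N, g k = ∑ k ∈ Finset.Ioc 0 N, g k :=
    Finset.sum_Ioc_consecutive _ (by omega) (by omega)
  have h2 : ∑ k ∈ Finset.Ioc q N, g k + ∑ k ∈ Finset.Ioc N (N + q), g k
      = ∑ k ∈ Finset.Ioc q (N + q), g k :=
    Finset.sum_Ioc_consecutive _ (by omega) (by omega)
  -- step 3: identify the boundary sums
  have hb1 : ∑ k ∈ Finset.Ioc 0 q, g k
      = ∑ k ∈ Finset.Icc 1 q, (-1 : ℝ) ^ (k - 1) * ∏ j ∈ Finset.range m, f (n * k + j * n * q) := by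
    rw [← hIoc]
  have hb2 : ∑ k ∈ Finset.Ioc N (N + q), g k
      = -((-1 : ℝ) ^ (N - 1) * ∑ k ∈ Finset.Icc 1 q, (-1 : ℝ) ^ (k - 1) *
          ∏ j ∈ Finset.range m, f (n * k + n * N + j * n * q)) := by
    rw [show Finset.Ioc N (N + q) = (Finset.Icc 1 q).map (addRightEmbedding N) by
      rw [Finset.map_add_right_Icc]; rw [← hIoc]; congr 1 <;> omega, Finset.sum_map,
      Finset.mul_sum, ← Finset.sum_neg_distrib]
    apply Finset.sum_congr rfl
    intro k hk
    simp only [Finset.mem_Icc] at hk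
    have : (addRightEmbedding N) k = k + N := rfl
    rw [this]
    simp only [hg]
    have hsgn : (-1 : ℝ) ^ (k + N - 1) = -((-1 : ℝ) ^ (N - 1) * (-1 : ℝ) ^ (k - 1)) := by
      rw [show k + N - 1 = (N - 1) + (k - 1) + 1 by omega, pow_succ, pow_add]; ring
    rw [hsgn]
    have harg : ∀ j, n * (k + N) + j * n * q = n * k + n * N + j * n * q := by
      intro j; ring
    simp only [harg]
    ring
  rw [hb1] at h1
  rw [hb2] at h2
  linarith
end

section
/- Let f : ℕ → ℝ be a real sequence and let m, n, q, N be positive integers with N ≥ q and q odd. Then Σ_{k=1}^{N} (−1)^{k−1} ( [f(nk) + f(nk + mnq)] · Π_{j=1}^{m−1} f(nk + jnq) ) = Σ_{k=1}^{q} (−1)^{k−1} Π_{j=0}^{m−1} f(nk + jnq) + (−1)^{N−1} Σ_{k=1}^{q} (−1)^{k−1} Π_{j=0}^{m−1} f(nk + nN + jnq). -/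
/-- Alternating telescoping summation identity (Lemma 3, `q` odd). -/
theorem stmt_2 (f : ℕ → ℝ) (m n q N : ℕ) (hm : 0 < m) (hn : 0 < n) (hq : 0 < q)
    (hN : 0 < N) (hNq : q ≤ N) (hqodd : Odd q) :
    ∑ k ∈ Finset.Icc 1 N, (-1 : ℝ) ^ (k - 1) *
        ((f (n * k) + f (n * k + m * n * q)) * ∏ j ∈ Finset.Icc 1 (m - 1), f (n * k + j * n * q))
      = ∑ k ∈ Finset.Icc 1 q, (-1 : ℝ) ^ (k - 1) * ∏ j ∈ Finset.range m, f (n * k + j * n * q)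
        + (-1 : ℝ) ^ (N - 1) *
          ∑ k ∈ Finset.Icc 1 q, (-1 : ℝ) ^ (k - 1) *
            ∏ j ∈ Finset.range m, f (n * k + n * N + j * n * q) := by
  obtain ⟨m', rfl⟩ : ∃ m', m = m' + 1 := ⟨m - 1, (Nat.succ_pred_eq_of_pos hm).symm⟩
  obtain ⟨N', rfl⟩ : ∃ N', N = N' + 1 := ⟨N - 1, (Nat.succ_pred_eq_of_pos hN).symm⟩
  set g : ℕ → ℝ := fun k => ∏ j ∈ Finset.range (m' + 1), f (n * k + j * n * q) with hg
  -- pointwise identity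
  have key : ∀ k : ℕ, (f (n * k) + f (n * k + (m' + 1) * n * q)) *
      ∏ j ∈ Finset.Icc 1 (m' + 1 - 1), f (n * k + j * n * q) = g k + g (k + q) := by
    intro k
    have h1 : ∏ j ∈ Finset.Icc 1 (m' + 1 - 1), f (n * k + j * n * q)
        = ∏ j ∈ Finset.range m', f (n * k + (j + 1) * n * q) := by
      rw [show m' + 1 - 1 = m' from rfl, ← Finset.Ico_add_one_right_eq_Icc, Finset.prod_Ico_eq_prod_range]
      apply Finset.prod_congr (by congr 1) (fun j _ => by congr 1; ring)
    have h2 : g k = f (n * k) * ∏ j ∈ Finset.range m', f (n * k + (j + 1) * n * q) := by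
      rw [hg]; simp only [Finset.prod_range_succ']
      simp [mul_comm]
    have h3 : g (k + q) = (∏ j ∈ Finset.range m', f (n * k + (j + 1) * n * q)) *
        f (n * k + (m' + 1) * n * q) := by
      rw [hg]; simp only [Finset.prod_range_succ]
      congr 1
      · exact Finset.prod_congr rfl (fun j _ => by congr 1; ring)
      · congr 1; ring
    rw [h1, h2, h3]; ring
  -- convert Icc sums to range sums
  have icc : ∀ (M : ℕ) (h : ℕ → ℝ), ∑ k ∈ Finset.Icc 1 M, (-1 : ℝ) ^ (k - 1) * h k
      = ∑ i ∈ Finset.range M, (-1 : ℝ) ^ i * h (i + 1) := by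
    intro M h
    rw [← Finset.Ico_add_one_right_eq_Icc, Finset.sum_Ico_eq_sum_range]
    exact Finset.sum_congr (by congr 1) (fun i _ => by rw [Nat.add_sub_cancel_left, add_comm 1 i])
  simp only [icc, key]
  -- set F
  set F : ℕ → ℝ := fun i => (-1 : ℝ) ^ i * g (i + 1) with hF
  have step1 : ∑ i ∈ Finset.range (N' + 1), (-1 : ℝ) ^ i * (g (i + 1) + g (i + 1 + q))
      = ∑ i ∈ Finset.range (N' + 1), F i - ∑ i ∈ Finset.Ico q (q + (N' + 1)), F i := by
    rw [Finset.sum_Ico_eq_sum_range, show q + (N' + 1) - q = N' + 1 from by omega]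
    rw [← Finset.sum_sub_distrib]
    apply Finset.sum_congr rfl
    intro i _
    have : ((-1 : ℝ)) ^ (q + i) = -(-1 : ℝ) ^ i := by
      rw [pow_add, hqodd.neg_one_pow]; ring
    simp only [hF, this]
    rw [show q + i + 1 = i + 1 + q from by ring]
    ring
  rw [step1]
  have split1 : ∑ i ∈ Finset.range (N' + 1), F i
      = ∑ i ∈ Finset.Ico 0 q, F i + ∑ i ∈ Finset.Ico q (N' + 1), F i := by
    rw [Finset.sum_Ico_consecutive F (Nat.zero_le q) hNq, Finset.range_eq_Ico]
  have split2 : ∑ i ∈ Finset.Ico q (q + (N' + 1)), F i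
      = ∑ i ∈ Finset.Ico q (N' + 1), F i + ∑ i ∈ Finset.Ico (N' + 1) (q + (N' + 1)), F i :=
    (Finset.sum_Ico_consecutive F hNq (by omega)).symm
  rw [split1, split2]
  have tail : ∑ i ∈ Finset.Ico (N' + 1) (q + (N' + 1)), F i
      = -((-1 : ℝ) ^ N' * ∑ i ∈ Finset.range q, (-1 : ℝ) ^ i * g (i + 1 + (N' + 1))) := by
    rw [show q + (N' + 1) = (N' + 1) + q from by ring, Finset.sum_Ico_eq_sum_range,
      show N' + 1 + q - (N' + 1) = q from by omega, Finset.mul_sum, ← Finset.sum_neg_distrib]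
    apply Finset.sum_congr rfl
    intro i _
    simp only [hF]
    have e1 : ((-1 : ℝ)) ^ (N' + 1 + i) = -((-1 : ℝ) ^ N' * (-1 : ℝ) ^ i) := by
      rw [pow_add, pow_succ]; ring
    have e2 : g (N' + 1 + i + 1) = g (i + 1 + (N' + 1)) := by congr 1; omega
    rw [e1, e2]; ring
  rw [tail]
  have head : ∑ i ∈ Finset.Ico 0 q, F i = ∑ i ∈ Finset.range q, (-1:ℝ)^i * g (i+1) := by
    rw [Finset.range_eq_Ico]
  rw [head]
  have prodeq : ∀ i : ℕ, (∏ j ∈ Finset.range (m' + 1), f (n * (i + 1) + n * (N' + 1) + j * n * q))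
      = g (i + 1 + (N' + 1)) := by
    intro i
    exact Finset.prod_congr rfl (fun j _ => by congr 1; ring)
  simp only [prodeq, Nat.add_sub_cancel]
  ring
end

section
/- Let m, n, q be positive integers. Then the series Σ_{k=1}^{∞} (−1)^{nk−1} · ( Π_{j=1}^{m−1} L_{nk+jnq} ) / ( Π_{j=0}^{m} F_{nk+jnq} ) converges, and its sum equals q·√(5^m) / (2 F_{mnq}) − (1 / (2 F_{mnq})) · Σ_{k=1}^{q} Π_{j=0}^{m−1} ( L_{nk+jnq} / F_{nk+jnq} ). -/
open Filter Topology

/-- The Lucas numbers: `L 0 = 2`, `L 1 = 1`, `L (n+2) = L (n+1) + L n`. -/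
def lucas : ℕ → ℕ
  | 0 => 2
  | 1 => 1
  | n + 2 => lucas (n + 1) + lucas n


open goldenRatio

lemma lucas_add_two (t : ℕ) : lucas (t+2) = lucas (t+1) + lucas t := rfl

lemma lucas_binet (t : ℕ) : (lucas t : ℝ) = φ ^ t + ψ ^ t := by
  induction t using Nat.twoStepInduction with
  | zero => norm_num [lucas]
  | one => simp [lucas, Real.goldenRatio_add_goldenConj]
  | more t ih1 ih2 =>
    rw [lucas_add_two]
    push_cast
    rw [ih1, ih2]
    linear_combination (φ ^ t) * Real.goldenRatio_sq + (ψ ^ t) * Real.goldenConj_sq - ((φ^t+ψ^t)/2) * (Real.sq_sqrt (by norm_num : (0:ℝ) ≤ 5))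

lemma key1 (y : ℕ) : (lucas (y+1) : ℤ) * Nat.fib y - Nat.fib (y+1) * lucas y = 2 * (-1)^(y+1) := by
  induction y with
  | zero => simp [lucas]
  | succ y ih =>
    rw [lucas_add_two, Nat.fib_add_two]
    push_cast
    linear_combination -ih

lemma key (y d : ℕ) : (lucas (y+d) : ℤ) * Nat.fib y - Nat.fib (y+d) * lucas y
    = 2 * (-1)^(y+1) * Nat.fib d := by
  induction d using Nat.twoStepInduction with
  | zero => simp; ring
  | one => simpa using key1 y
  | more d ih1 ih2 =>
    have h1 : y + (d+2) = (y+d) + 2 := by ring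
    rw [h1, lucas_add_two, Nat.fib_add_two, Nat.fib_add_two]
    push_cast
    have h2 : y + (d+1) = (y+d)+1 := by ring
    rw [h2] at ih2
    linear_combination ih1 + ih2

lemma abs_goldConj_lt_one : |ψ| < 1 := by
  rw [abs_lt]
  exact ⟨Real.neg_one_lt_goldenConj, Real.goldenConj_neg.trans one_pos⟩

lemma ratio_tendsto :
    Tendsto (fun t : ℕ => (lucas t : ℝ) / (Nat.fib t : ℝ)) atTop (𝓝 (Real.sqrt 5)) := by
  have h5 : Real.sqrt 5 ≠ 0 := by positivity
  have heq : ∀ t : ℕ, 1 ≤ t →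
      Real.sqrt 5 + 2 * ψ ^ t / (Nat.fib t : ℝ) = (lucas t : ℝ) / (Nat.fib t : ℝ) := by
    intro t ht
    have hpos : (0:ℝ) < (Nat.fib t : ℝ) := by
      exact_mod_cast Nat.fib_pos.mpr ht
    have hF : Real.sqrt 5 * (Nat.fib t : ℝ) = φ ^ t - ψ ^ t := by
      rw [Real.coe_fib_eq]; field_simp
    have hl : (lucas t : ℝ) = Real.sqrt 5 * (Nat.fib t : ℝ) + 2 * ψ ^ t := by
      rw [lucas_binet]; linear_combination -hF
    calc Real.sqrt 5 + 2 * ψ ^ t / (Nat.fib t : ℝ)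
        = (Real.sqrt 5 * (Nat.fib t : ℝ)) / (Nat.fib t : ℝ)
            + 2 * ψ ^ t / (Nat.fib t : ℝ) := by
          rw [mul_div_cancel_right₀ _ hpos.ne']
      _ = (Real.sqrt 5 * (Nat.fib t : ℝ) + 2 * ψ ^ t) / (Nat.fib t : ℝ) := by
          rw [← add_div]
      _ = (lucas t : ℝ) / (Nat.fib t : ℝ) := by rw [hl]
  have hb : Tendsto (fun t : ℕ => 2 * ψ ^ t / (Nat.fib t : ℝ)) atTop (𝓝 0) := by
    have hlim : Tendsto (fun t : ℕ => 2 * |ψ| ^ t) atTop (𝓝 0) := by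
      have := tendsto_pow_atTop_nhds_zero_of_lt_one (abs_nonneg ψ) abs_goldConj_lt_one
      simpa using this.const_mul 2
    refine squeeze_zero_norm (fun t => ?_) hlim
    rcases Nat.eq_zero_or_pos t with h | h
    · subst h; simp
    · have hpos : (1:ℝ) ≤ (Nat.fib t : ℝ) := by
        exact_mod_cast Nat.fib_pos.mpr h
      rw [norm_div, norm_mul]
      have h1 : ‖(Nat.fib t : ℝ)‖ = (Nat.fib t : ℝ) := by
        rw [Real.norm_eq_abs, abs_of_pos (by linarith)]
      rw [h1]
      have h2 : ‖(2:ℝ)‖ * ‖ψ ^ t‖ = 2 * |ψ| ^ t := by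
        rw [norm_pow, Real.norm_eq_abs, Real.norm_eq_abs]; norm_num [abs_of_pos]
      rw [h2]
      have h3 : (0:ℝ) ≤ 2 * |ψ| ^ t := by positivity
      exact div_le_self h3 hpos
  have hadd := (tendsto_const_nhds (x := Real.sqrt 5) (f := atTop (α := ℕ))).add hb
  rw [add_zero] at hadd
  exact hadd.congr' (by filter_upwards [eventually_ge_atTop 1] with t ht using heq t ht)

lemma icc_sum_eq (g : ℕ → ℝ) (q : ℕ) :
    ∑ k ∈ Finset.Icc 1 q, g k = ∑ i ∈ Finset.range q, g (i+1) := by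
  rw [← Finset.Ico_add_one_right_eq_Icc, Finset.sum_Ico_eq_sum_range]
  simp [add_comm]

/-- Theorem (Fibonacci denominators, general alternating sum):
`Σ_{k=1}^{∞} (−1)^{nk−1} (Π_{j=1}^{m−1} L_{nk+jnq}) / (Π_{j=0}^{m} F_{nk+jnq})
  = q√(5^m)/(2 F_{mnq}) − (1/(2F_{mnq})) Σ_{k=1}^{q} Π_{j=0}^{m−1} L_{nk+jnq}/F_{nk+jnq}`. -/
theorem stmt_3 (m n q : ℕ) (hm : 0 < m) (hn : 0 < n) (hq : 0 < q) :
    Tendsto (fun N => ∑ k ∈ Finset.Icc 1 N,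
        (-1 : ℝ) ^ (n * k - 1) *
          (∏ j ∈ Finset.Icc 1 (m - 1), (lucas (n * k + j * n * q) : ℝ)) /
          ∏ j ∈ Finset.range (m + 1), (Nat.fib (n * k + j * n * q) : ℝ))
      atTop
      (𝓝 ((q : ℝ) * Real.sqrt (5 ^ m) / (2 * (Nat.fib (m * n * q) : ℝ))
        - (1 / (2 * (Nat.fib (m * n * q) : ℝ))) *
          ∑ k ∈ Finset.Icc 1 q, ∏ j ∈ Finset.range m,
            (lucas (n * k + j * n * q) : ℝ) / (Nat.fib (n * k + j * n * q) : ℝ))) := by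
  obtain ⟨p, rfl⟩ : ∃ p, m = p + 1 := ⟨m - 1, (Nat.succ_pred_eq_of_pos hm).symm⟩
  set m := p + 1 with hmdef
  have hFmpos : (0:ℝ) < (Nat.fib (m*n*q) : ℝ) := by
    have : 0 < m*n*q := by positivity
    exact_mod_cast Nat.fib_pos.mpr this
  set G : ℕ → ℝ := fun k => ∏ j ∈ Finset.range m,
      (lucas (n*k + j*n*q) : ℝ) / (Nat.fib (n*k + j*n*q) : ℝ) with hGdef
  have hfibpos : ∀ k j : ℕ, 1 ≤ k → (0:ℝ) < (Nat.fib (n*k + j*n*q) : ℝ) := by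
    intro k j hk
    have : 0 < n*k + j*n*q := by
      have := Nat.mul_pos hn hk
      omega
    exact_mod_cast Nat.fib_pos.mpr this
  -- step identity
  have hstep : ∀ k, 1 ≤ k →
      (-1 : ℝ) ^ (n * k - 1) *
          (∏ j ∈ Finset.Icc 1 (m - 1), (lucas (n * k + j * n * q) : ℝ)) /
          ∏ j ∈ Finset.range (m + 1), (Nat.fib (n * k + j * n * q) : ℝ)
        = (G (k+q) - G k) / (2 * (Nat.fib (m*n*q) : ℝ)) := by
    intro k hk
    have hkey : (lucas (n*k + m*n*q) : ℝ) * (Nat.fib (n*k + 0*n*q) : ℝ)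
        - (Nat.fib (n*k + m*n*q) : ℝ) * (lucas (n*k + 0*n*q) : ℝ)
        = 2 * (-1)^(n*k+1) * (Nat.fib (m*n*q) : ℝ) := by
      have e0 : n*k + 0*n*q = n*k := by ring
      rw [e0]
      exact_mod_cast congrArg (fun z : ℤ => (z : ℝ)) (key (n*k) (m*n*q))
    have hsgn : (-1:ℝ)^(n*k+1) = (-1:ℝ)^(n*k-1) := by
      obtain ⟨b, hb⟩ : ∃ b, n*k = b + 1 := ⟨n*k - 1, by
        have := Nat.mul_pos hn hk; omega⟩
      rw [hb]
      simp [pow_succ, pow_add]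
    -- rewrite G (k+q)
    have hidx : ∀ j : ℕ, n*(k+q) + j*n*q = n*k + (j+1)*n*q := by intro j; ring
    have hGkq : G (k+q) = ∏ j ∈ Finset.range m,
        (lucas (n*k + (j+1)*n*q) : ℝ) / (Nat.fib (n*k + (j+1)*n*q) : ℝ) := by
      rw [hGdef]
      exact Finset.prod_congr rfl fun j _ => by rw [hidx j]
    set r : ℕ → ℝ := fun j => (lucas (n*k + j*n*q) : ℝ) / (Nat.fib (n*k + j*n*q) : ℝ)
      with hrdef
    set M : ℝ := ∏ j ∈ Finset.range p, r (j+1) with hMdef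
    have hGkq2 : G (k+q) = M * r m := by
      rw [hGkq]
      exact Finset.prod_range_succ (fun j => r (j+1)) p
    have hGk2 : G k = M * r 0 := by
      rw [hGdef]
      exact (Finset.prod_range_succ' r p)
    -- numerator product
    have hnum : (∏ j ∈ Finset.Icc 1 (m - 1), (lucas (n * k + j * n * q) : ℝ))
        = ∏ j ∈ Finset.range p, (lucas (n*k + (j+1)*n*q) : ℝ) := by
      have : m - 1 = p := by omega
      rw [this, ← Finset.Ico_add_one_right_eq_Icc, Finset.prod_Ico_eq_prod_range]
      simp [add_comm]
    -- denominator product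
    have hden : (∏ j ∈ Finset.range (m + 1), (Nat.fib (n * k + j * n * q) : ℝ))
        = ((∏ j ∈ Finset.range p, (Nat.fib (n*k + (j+1)*n*q) : ℝ))
            * (Nat.fib (n*k + 0*n*q) : ℝ)) * (Nat.fib (n*k + m*n*q) : ℝ) := by
      rw [Finset.prod_range_succ, Finset.prod_range_succ']
    set PL : ℝ := ∏ j ∈ Finset.range p, (lucas (n*k + (j+1)*n*q) : ℝ) with hPLdef
    set PF : ℝ := ∏ j ∈ Finset.range p, (Nat.fib (n*k + (j+1)*n*q) : ℝ) with hPFdef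
    have hM : M = PL / PF := by
      rw [hMdef, hPLdef, hPFdef, ← Finset.prod_div_distrib]
    have hPFpos : (0:ℝ) < PF := Finset.prod_pos fun j _ => hfibpos k (j+1) hk
    have hF0 : (0:ℝ) < (Nat.fib (n*k + 0*n*q) : ℝ) := hfibpos k 0 hk
    have hFm : (0:ℝ) < (Nat.fib (n*k + m*n*q) : ℝ) := hfibpos k m hk
    have h00 : n*k + 0*n*q = n*k := by ring
    have hr : r m - r 0 = (2 * (-1:ℝ)^(n*k+1) * (Nat.fib (m*n*q) : ℝ))
        / ((Nat.fib (n*k + m*n*q) : ℝ) * (Nat.fib (n*k + 0*n*q) : ℝ)) := by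
      rw [hrdef]
      simp only []
      rw [div_sub_div _ _ hFm.ne' hF0.ne', hkey]
    rw [hnum, hden, hGkq2, hGk2, hM, ← hsgn]
    rw [show PL/PF * r m - PL/PF * r 0 = PL/PF * (r m - r 0) by ring, hr]
    have haux : ∀ (x pl pf f0 fm fb : ℝ), pf ≠ 0 → f0 ≠ 0 → fm ≠ 0 → fb ≠ 0 →
        x * pl / (pf * f0 * fm) = (pl / pf * (2 * x * fb / (fm * f0))) / (2 * fb) := by
      intros x pl pf f0 fm fb h1 h2 h3 h4
      field_simp
    exact haux _ PL PF _ _ _ hPFpos.ne' hF0.ne' hFm.ne' hFmpos.ne'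
  -- telescoping
  have htel : ∀ N, ∑ k ∈ Finset.Icc 1 N, (G (k+q) - G k)
      = (∑ k ∈ Finset.Icc 1 q, G (N+k)) - ∑ k ∈ Finset.Icc 1 q, G k := by
    intro N
    induction N with
    | zero => simp
    | succ N ih =>
      rw [Finset.sum_Icc_succ_top (by omega : 1 ≤ N + 1), ih]
      have key2 : (∑ k ∈ Finset.Icc 1 q, G (N+1+k)) - ∑ k ∈ Finset.Icc 1 q, G (N+k)
          = G (N+1+q) - G (N+1) := by
        rw [icc_sum_eq (fun k => G (N+1+k)) q, icc_sum_eq (fun k => G (N+k)) q,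
          ← Finset.sum_sub_distrib]
        have h2 := Finset.sum_range_sub (fun i => G (N+1+i)) q
        rw [← h2]
        apply Finset.sum_congr rfl
        intro i _
        have e1 : N+1+(i+1) = N+1+i+1 := by omega
        have e2 : N+(i+1) = N+1+i := by omega
        rw [e1, e2]
      linarith [key2]
  have hpartial : ∀ N, (∑ k ∈ Finset.Icc 1 N,
        (-1 : ℝ) ^ (n * k - 1) *
          (∏ j ∈ Finset.Icc 1 (m - 1), (lucas (n * k + j * n * q) : ℝ)) /
          ∏ j ∈ Finset.range (m + 1), (Nat.fib (n * k + j * n * q) : ℝ))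
      = ((∑ k ∈ Finset.Icc 1 q, G (N+k)) - ∑ k ∈ Finset.Icc 1 q, G k)
          / (2 * (Nat.fib (m*n*q) : ℝ)) := by
    intro N
    rw [← htel N, Finset.sum_div]
    apply Finset.sum_congr rfl
    intro k hk
    exact hstep k (Finset.mem_Icc.mp hk).1
  -- limits
  have hinner : ∀ c j : ℕ, Tendsto (fun N : ℕ => n*(N+c) + j*n*q) atTop atTop := by
    intro c j
    apply tendsto_atTop_mono (fun N => ?_) tendsto_id
    have h1 : N + c ≤ n*(N+c) := Nat.le_mul_of_pos_left (N+c) hn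
    simp only [id]
    omega
  have hG1 : ∀ c : ℕ, Tendsto (fun N => G (N + c)) atTop (𝓝 ((Real.sqrt 5)^m)) := by
    intro c
    have h := tendsto_finset_prod (Finset.range m)
      (f := fun (j : ℕ) (N : ℕ) =>
        (lucas (n*(N+c) + j*n*q) : ℝ) / (Nat.fib (n*(N+c) + j*n*q) : ℝ))
      (a := fun _ => Real.sqrt 5)
      (fun j _ => ratio_tendsto.comp (hinner c j))
    simpa [hGdef] using h
  have hsumlim : Tendsto (fun N => ∑ k ∈ Finset.Icc 1 q, G (N+k)) atTop
      (𝓝 ((q : ℝ) * (Real.sqrt 5)^m)) := by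
    have h := tendsto_finset_sum (Finset.Icc 1 q) (fun k _ => hG1 k)
    have hcard : (Finset.Icc 1 q).card = q := by rw [Nat.card_Icc]; omega
    rw [Finset.sum_const, hcard] at h
    simpa [nsmul_eq_mul] using h
  have hfinal := (hsumlim.sub (tendsto_const_nhds
      (x := ∑ k ∈ Finset.Icc 1 q, G k))).div_const (2 * (Nat.fib (m*n*q) : ℝ))
  have hsq : Real.sqrt ((5:ℝ)^m) = (Real.sqrt 5)^m := by
    rw [show ((5:ℝ)^m) = ((Real.sqrt 5)^m)^2 by
        rw [← pow_mul, mul_comm, pow_mul, Real.sq_sqrt (by norm_num : (0:ℝ) ≤ 5)],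
      Real.sqrt_sq (by positivity)]
  have hval : ((q : ℝ) * (Real.sqrt 5)^m - ∑ k ∈ Finset.Icc 1 q, G k)
        / (2 * (Nat.fib (m*n*q) : ℝ))
      = (q : ℝ) * Real.sqrt (5 ^ m) / (2 * (Nat.fib (m * n * q) : ℝ))
        - (1 / (2 * (Nat.fib (m * n * q) : ℝ))) * ∑ k ∈ Finset.Icc 1 q, G k := by
    push_cast
    rw [hsq]
    ring
  rw [← hval]
  exact hfinal.congr fun N => (hpartial N).symm
end

section
/- Let m, n, q be positive odd integers. Then the series Σ_{k=1}^{∞} 1 / ( Π_{j=0}^{m−1} F_{nk+njq} · Π_{j=m+1}^{2m} F_{nk+njq} ) converges, and its sum equals (1 / L_{mnq}) · Σ_{k=1}^{q} 1 / ( Π_{j=0}^{2m−1} F_{nk+njq} ). -/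
open Filter Topology

lemma lucas_succ_eq : ∀ c : ℕ, lucas (c + 1) = Nat.fib c + Nat.fib (c + 2) := by
  have H : ∀ c : ℕ, lucas (c + 1) = Nat.fib c + Nat.fib (c + 2) ∧
      lucas (c + 2) = Nat.fib (c + 1) + Nat.fib (c + 3) := by
    intro c
    induction c with
    | zero => constructor <;> decide
    | succ d ih =>
      refine ⟨ih.2, ?_⟩
      show lucas (d + 2) + lucas (d + 1) = Nat.fib (d + 2) + Nat.fib (d + 4)
      rw [ih.1, ih.2]
      have h1 : Nat.fib (d + 2) = Nat.fib d + Nat.fib (d + 1) := Nat.fib_add_two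
      have h2 : Nat.fib (d + 4) = Nat.fib (d + 2) + Nat.fib (d + 3) := Nat.fib_add_two
      omega
  exact fun c => (H c).1

lemma fib_cast_add_two (d : ℕ) :
    (Nat.fib (d + 2) : ℤ) = Nat.fib d + Nat.fib (d + 1) := by
  exact_mod_cast (Nat.fib_add_two : Nat.fib (d + 2) = _)

lemma cassini : ∀ n : ℕ, (Nat.fib (n + 1) : ℤ) ^ 2 - Nat.fib n * Nat.fib (n + 2) = (-1) ^ n := by
  intro n
  induction n with
  | zero => simp
  | succ d ih =>
    have h1 := fib_cast_add_two d
    have h2 := fib_cast_add_two (d + 1)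
    simp only [show d + 1 + 1 = d + 2 from by omega, show d + 1 + 2 = d + 3 from by omega] at h2
    show (Nat.fib (d + 2) : ℤ) ^ 2 - Nat.fib (d + 1) * Nat.fib (d + 3) = (-1) ^ (d + 1)
    rw [h1] at ih
    rw [h2, h1, pow_succ]
    linear_combination -ih

lemma fib_key (b : ℕ) (hb : Odd b) : ∀ a : ℕ,
    (Nat.fib (a + 2 * b) : ℤ) = lucas b * Nat.fib (a + b) + Nat.fib a := by
  obtain ⟨c, hc⟩ := hb
  subst hc
  have hL : lucas (2 * c + 1) = Nat.fib (2 * c) + Nat.fib (2 * c + 2) := lucas_succ_eq _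
  have base0 : (Nat.fib (0 + 2 * (2 * c + 1)) : ℤ)
      = lucas (2 * c + 1) * Nat.fib (0 + (2 * c + 1)) + Nat.fib 0 := by
    have h := Nat.fib_add (2 * c) (2 * c + 1)
    have h' : 2 * c + (2 * c + 1) + 1 = 0 + 2 * (2 * c + 1) := by ring
    rw [h'] at h
    rw [h, hL]
    simp only [show 2 * c + 1 + 1 = 2 * c + 2 from by omega, Nat.zero_add, Nat.fib_zero]
    push_cast
    ring
  have base1 : (Nat.fib (1 + 2 * (2 * c + 1)) : ℤ)
      = lucas (2 * c + 1) * Nat.fib (1 + (2 * c + 1)) + Nat.fib 1 := by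
    have h := Nat.fib_add (2 * c + 1) (2 * c + 1)
    have h' : 2 * c + 1 + (2 * c + 1) + 1 = 1 + 2 * (2 * c + 1) := by ring
    rw [h'] at h
    have hcas := cassini (2 * c)
    have hpow : ((-1 : ℤ)) ^ (2 * c) = 1 := Even.neg_one_pow ⟨c, by ring⟩
    rw [hpow] at hcas
    rw [h, hL]
    simp only [show 2 * c + 1 + 1 = 2 * c + 2 from by omega,
      show 1 + (2 * c + 1) = 2 * c + 2 from by omega, Nat.fib_one]
    push_cast
    linear_combination hcas
  have H : ∀ a : ℕ, (Nat.fib (a + 2 * (2 * c + 1)) : ℤ)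
        = lucas (2 * c + 1) * Nat.fib (a + (2 * c + 1)) + Nat.fib a ∧
      (Nat.fib (a + 1 + 2 * (2 * c + 1)) : ℤ)
        = lucas (2 * c + 1) * Nat.fib (a + 1 + (2 * c + 1)) + Nat.fib (a + 1) := by
    intro a
    induction a with
    | zero => exact ⟨base0, base1⟩
    | succ d ih =>
      refine ⟨ih.2, ?_⟩
      have e1 : d + 1 + 1 + 2 * (2 * c + 1) = (d + 2 * (2 * c + 1)) + 2 := by ring
      have e2 : d + 1 + 1 + (2 * c + 1) = (d + (2 * c + 1)) + 2 := by ring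
      have e3 : d + 1 + 2 * (2 * c + 1) = (d + 2 * (2 * c + 1)) + 1 := by ring
      have e4 : d + 1 + (2 * c + 1) = (d + (2 * c + 1)) + 1 := by ring
      rw [e1, e2]
      have f1 := fib_cast_add_two (d + 2 * (2 * c + 1))
      have f2 := fib_cast_add_two (d + (2 * c + 1))
      have f3 := fib_cast_add_two d
      have i1 := ih.1
      have i2 := ih.2
      rw [e3, e4] at i2
      rw [f1, f2, f3]
      linear_combination i1 + i2
  exact fun a => (H a).1

lemma fib_succ_ge : ∀ k : ℕ, k ≤ Nat.fib (k + 1) := by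
  intro k
  induction k with
  | zero => simp
  | succ d ih =>
    show d + 1 ≤ Nat.fib (d + 2)
    have h : Nat.fib (d + 2) = Nat.fib d + Nat.fib (d + 1) := Nat.fib_add_two
    rcases Nat.eq_zero_or_pos d with hd | hd
    · subst hd; decide
    · have : 1 ≤ Nat.fib d := Nat.fib_pos.mpr hd
      omega

lemma tele (g : ℕ → ℝ) (N q : ℕ) :
    ∑ i ∈ Finset.range N, (g i - g (i + q))
      = ∑ i ∈ Finset.range q, g i - ∑ i ∈ Finset.range q, g (N + i) := by
  have h1 := Finset.sum_range_add g q N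
  have h2 := Finset.sum_range_add g N q
  rw [Finset.sum_sub_distrib]
  have h3 : ∑ i ∈ Finset.range N, g (i + q) = ∑ i ∈ Finset.range N, g (q + i) := by
    simp [Nat.add_comm]
  rw [h3]
  rw [Nat.add_comm q N] at h1
  linarith

lemma term_eq (m n q k : ℕ) (hm' : 0 < m) (hn' : 0 < n) (hq' : 0 < q) (hk : 0 < k)
    (hbodd : Odd (m * n * q)) :
    (1 : ℝ) / ((∏ j ∈ Finset.range m, (Nat.fib (n * k + n * j * q) : ℝ)) *
          ∏ j ∈ Finset.Icc (m + 1) (2 * m), (Nat.fib (n * k + n * j * q) : ℝ))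
    = ((1 / ∏ j ∈ Finset.range (2 * m), (Nat.fib (n * k + n * j * q) : ℝ))
       - 1 / ∏ j ∈ Finset.range (2 * m), (Nat.fib (n * (k + q) + n * j * q) : ℝ))
      / (lucas (m * n * q) : ℝ) := by
  set f : ℕ → ℝ := fun j => (Nat.fib (n * k + n * j * q) : ℝ) with hf
  have hfpos : ∀ j, 0 < f j := fun j => by
    have h : 0 < n * k + n * j * q := by positivity
    show (0 : ℝ) < (Nat.fib (n * k + n * j * q) : ℝ)
    exact_mod_cast Nat.fib_pos.mpr h
  have hLpos : (0 : ℝ) < (lucas (m * n * q) : ℝ) := by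
    have h := lucas_succ_eq (m * n * q - 1)
    have e : m * n * q - 1 + 1 = m * n * q := by
      have : 0 < m * n * q := by positivity
      omega
    rw [e] at h
    have h2 : 0 < Nat.fib (m * n * q - 1 + 2) := Nat.fib_pos.mpr (by omega)
    have : 0 < lucas (m * n * q) := by omega
    exact_mod_cast this
  have hA1 : ∏ j ∈ Finset.range (2 * m + 1), f j
      = (∏ j ∈ Finset.range m, f j) * f m * ∏ j ∈ Finset.Icc (m + 1) (2 * m), f j := by
    rw [show 2 * m + 1 = (m + 1) + m from by ring, Finset.prod_range_add,
      Finset.prod_range_succ]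
    congr 1
    rw [show Finset.Icc (m + 1) (2 * m) = Finset.Ico (m + 1) (2 * m + 1) from
      (Finset.Ico_add_one_right_eq_Icc _ _).symm, Finset.prod_Ico_eq_prod_range]
    rw [show 2 * m + 1 - (m + 1) = m from by omega]
  have hA2 : ∏ j ∈ Finset.range (2 * m + 1), f j
      = (∏ j ∈ Finset.range (2 * m), f j) * f (2 * m) := Finset.prod_range_succ f (2 * m)
  have hA3 : ∏ j ∈ Finset.range (2 * m + 1), f j
      = f 0 * ∏ j ∈ Finset.range (2 * m), (Nat.fib (n * (k + q) + n * j * q) : ℝ) := by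
    rw [Finset.prod_range_succ' f (2 * m), mul_comm]
    congr 1
    refine Finset.prod_congr rfl fun j _ => ?_
    rw [hf]
    congr 2
    ring
  have hkey : f (2 * m) = (lucas (m * n * q) : ℝ) * f m + f 0 := by
    have h := fib_key (m * n * q) hbodd (n * k)
    show (Nat.fib (n * k + n * (2 * m) * q) : ℝ)
        = (lucas (m * n * q) : ℝ) * (Nat.fib (n * k + n * m * q) : ℝ)
          + (Nat.fib (n * k + n * 0 * q) : ℝ)
    rw [show n * k + n * (2 * m) * q = n * k + 2 * (m * n * q) from by ring,
      show n * k + n * m * q = n * k + m * n * q from by ring,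
      show n * k + n * 0 * q = n * k from by ring]
    exact_mod_cast h
  have hP1 : (0 : ℝ) < ∏ j ∈ Finset.range m, f j :=
    Finset.prod_pos fun j _ => hfpos j
  have hP2 : (0 : ℝ) < ∏ j ∈ Finset.Icc (m + 1) (2 * m), f j :=
    Finset.prod_pos fun j _ => hfpos j
  have hPk : (0 : ℝ) < ∏ j ∈ Finset.range (2 * m), f j :=
    Finset.prod_pos fun j _ => hfpos j
  have hPk' : (0 : ℝ) < ∏ j ∈ Finset.range (2 * m), (Nat.fib (n * (k + q) + n * j * q) : ℝ) := by
    refine Finset.prod_pos fun j _ => ?_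
    have h : 0 < n * (k + q) + n * j * q := by positivity
    exact_mod_cast Nat.fib_pos.mpr h
  have hA : (0 : ℝ) < ∏ j ∈ Finset.range (2 * m + 1), f j :=
    Finset.prod_pos fun j _ => hfpos j
  have e0 : (1 : ℝ) / ((∏ j ∈ Finset.range m, f j) * ∏ j ∈ Finset.Icc (m + 1) (2 * m), f j)
      = f m / ∏ j ∈ Finset.range (2 * m + 1), f j := by
    rw [div_eq_div_iff (by positivity) hA.ne', hA1]; ring
  have e1 : (1 : ℝ) / (∏ j ∈ Finset.range (2 * m), f j)
      = f (2 * m) / ∏ j ∈ Finset.range (2 * m + 1), f j := by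
    rw [div_eq_div_iff hPk.ne' hA.ne', hA2]; ring
  have e2 : (1 : ℝ) / (∏ j ∈ Finset.range (2 * m), (Nat.fib (n * (k + q) + n * j * q) : ℝ))
      = f 0 / ∏ j ∈ Finset.range (2 * m + 1), f j := by
    rw [div_eq_div_iff hPk'.ne' hA.ne', hA3]; ring
  rw [e0, e1, e2, hkey, div_sub_div_same, add_sub_cancel_right, mul_div_assoc,
    mul_div_cancel_left₀ _ hLpos.ne']

/-- Theorem (`m`, `n`, `q` odd):
`Σ_{k=1}^{∞} 1/(Π_{j=0}^{m−1} F_{nk+njq} · Π_{j=m+1}^{2m} F_{nk+njq})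
  = (1/L_{mnq}) Σ_{k=1}^{q} 1/(Π_{j=0}^{2m−1} F_{nk+njq})`. -/
theorem stmt_5 (m n q : ℕ) (hm : Odd m) (hn : Odd n) (hq : Odd q)
    (hm' : 0 < m) (hn' : 0 < n) (hq' : 0 < q) :
    Tendsto (fun N => ∑ k ∈ Finset.Icc 1 N,
        (1 : ℝ) / ((∏ j ∈ Finset.range m, (Nat.fib (n * k + n * j * q) : ℝ)) *
          ∏ j ∈ Finset.Icc (m + 1) (2 * m), (Nat.fib (n * k + n * j * q) : ℝ)))
      atTop
      (𝓝 ((1 / (lucas (m * n * q) : ℝ)) *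
        ∑ k ∈ Finset.Icc 1 q,
          (1 : ℝ) / ∏ j ∈ Finset.range (2 * m), (Nat.fib (n * k + n * j * q) : ℝ))) := by
  have hbodd : Odd (m * n * q) := (hm.mul hn).mul hq
  set L : ℝ := (lucas (m * n * q) : ℝ) with hL
  have hLpos : (0 : ℝ) < L := by
    have h := lucas_succ_eq (m * n * q - 1)
    have e : m * n * q - 1 + 1 = m * n * q := by
      have : 0 < m * n * q := by positivity
      omega
    rw [e] at h
    have h2 : 0 < Nat.fib (m * n * q - 1 + 2) := Nat.fib_pos.mpr (by omega)
    have : 0 < lucas (m * n * q) := by omega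
    rw [hL]
    exact_mod_cast this
  set T : ℕ → ℝ := fun k => 1 / ∏ j ∈ Finset.range (2 * m), (Nat.fib (n * k + n * j * q) : ℝ)
    with hT
  have hTval : ∀ k, T k = 1 / ∏ j ∈ Finset.range (2 * m), (Nat.fib (n * k + n * j * q) : ℝ) :=
    fun k => rfl
  have hTnonneg : ∀ k, 0 ≤ T k := by
    intro k
    rw [hTval]
    positivity
  -- partial-sum formula
  have hsum : ∀ N : ℕ, (∑ k ∈ Finset.Icc 1 N,
      (1 : ℝ) / ((∏ j ∈ Finset.range m, (Nat.fib (n * k + n * j * q) : ℝ)) *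
        ∏ j ∈ Finset.Icc (m + 1) (2 * m), (Nat.fib (n * k + n * j * q) : ℝ)))
      = (1 / L) * ((∑ i ∈ Finset.range q, T (1 + i)) - ∑ i ∈ Finset.range q, T (1 + (N + i))) := by
    intro N
    have step1 : ∀ k ∈ Finset.Icc 1 N,
        (1 : ℝ) / ((∏ j ∈ Finset.range m, (Nat.fib (n * k + n * j * q) : ℝ)) *
          ∏ j ∈ Finset.Icc (m + 1) (2 * m), (Nat.fib (n * k + n * j * q) : ℝ))
        = (T k - T (k + q)) / L := by
      intro k hk
      exact term_eq m n q k hm' hn' hq' (Finset.mem_Icc.mp hk).1 hbodd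
    rw [Finset.sum_congr rfl step1]
    rw [show Finset.Icc 1 N = Finset.Ico 1 (N + 1) from (Finset.Ico_add_one_right_eq_Icc _ _).symm,
      Finset.sum_Ico_eq_sum_range]
    simp only [Nat.add_sub_cancel]
    rw [← Finset.sum_div]
    have hcong : ∀ i ∈ Finset.range N, T (1 + i) - T (1 + i + q) = T (1 + i) - T (1 + (i + q)) :=
      fun i _ => by rw [Nat.add_assoc]
    rw [Finset.sum_congr rfl hcong]
    have htl := tele (fun i => T (1 + i)) N q
    rw [htl, one_div, inv_mul_eq_div]
  -- the fixed head sum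
  have hC : ∑ i ∈ Finset.range q, T (1 + i) = ∑ k ∈ Finset.Icc 1 q, T k := by
    rw [show Finset.Icc 1 q = Finset.Ico 1 (q + 1) from (Finset.Ico_add_one_right_eq_Icc _ _).symm,
      Finset.sum_Ico_eq_sum_range]
    simp only [Nat.add_sub_cancel]
  -- bound for the tail
  have hTle : ∀ N i : ℕ, 1 ≤ N → T (1 + (N + i)) ≤ 1 / (N : ℝ) := by
    intro N i hN
    set k := 1 + (N + i) with hkdef
    have hk : N + 1 ≤ k := by omega
    have hNfib : (N : ℝ) ≤ (Nat.fib (n * k + n * 0 * q) : ℝ) := by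
      have e : n * k + n * 0 * q = n * k := by ring
      rw [e]
      have h1 : N + 1 ≤ n * k := le_trans hk (Nat.le_mul_of_pos_left k hn')
      have h2 : N ≤ Nat.fib (n * k) := le_trans (fib_succ_ge N) (Nat.fib_mono h1)
      exact_mod_cast h2
    have hprod : (Nat.fib (n * k + n * 0 * q) : ℝ)
        ≤ ∏ j ∈ Finset.range (2 * m), (Nat.fib (n * k + n * j * q) : ℝ) := by
      have hN : Nat.fib (n * k + n * 0 * q) ≤ ∏ j ∈ Finset.range (2 * m), Nat.fib (n * k + n * j * q) := by
        refine Finset.single_le_prod' (f := fun j => Nat.fib (n * k + n * j * q)) (a := 0)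
          (fun j _ => Nat.fib_pos.mpr (by positivity)) (Finset.mem_range.mpr (by omega : 0 < 2 * m))
      exact_mod_cast hN
    rw [hTval]
    apply one_div_le_one_div_of_le
    · have : (0 : ℕ) < N := hN
      exact_mod_cast this
    · exact le_trans hNfib hprod
  -- tail tends to zero
  have htail : Tendsto (fun N => ∑ i ∈ Finset.range q, T (1 + (N + i))) atTop (𝓝 0) := by
    have g0 : Tendsto (fun N : ℕ => (q : ℝ) * (1 / N)) atTop (𝓝 0) := by
      simpa using tendsto_one_div_atTop_nhds_zero_nat.const_mul (q : ℝ)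
    refine squeeze_zero' (Filter.Eventually.of_forall fun N =>
      Finset.sum_nonneg fun i _ => hTnonneg _) ?_ g0
    filter_upwards [eventually_ge_atTop 1] with N hN
    calc ∑ i ∈ Finset.range q, T (1 + (N + i))
        ≤ ∑ _i ∈ Finset.range q, 1 / (N : ℝ) :=
          Finset.sum_le_sum fun i _ => hTle N i hN
      _ = q * (1 / N) := by rw [Finset.sum_const, nsmul_eq_mul, Finset.card_range]
  -- assemble
  have h2 : Tendsto (fun N => (1 / L) * ((∑ i ∈ Finset.range q, T (1 + i))
        - ∑ i ∈ Finset.range q, T (1 + (N + i))))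
      atTop (𝓝 ((1 / L) * ((∑ i ∈ Finset.range q, T (1 + i)) - 0))) :=
    (tendsto_const_nhds.sub htail).const_mul (1 / L)
  refine Tendsto.congr (fun N => (hsum N).symm) ?_
  have e : (1 / L) * ∑ k ∈ Finset.Icc 1 q,
      (1 : ℝ) / ∏ j ∈ Finset.range (2 * m), (Nat.fib (n * k + n * j * q) : ℝ)
      = (1 / L) * ((∑ i ∈ Finset.range q, T (1 + i)) - 0) := by
    rw [sub_zero, hC]
  rw [e]
  exact h2
end

section
/- Let m, n, q be positive integers with q odd and nm even. Then the series Σ_{k=1}^{∞} (−1)^{k−1} / ( Π_{j=0}^{m−1} F_{nk+njq} · Π_{j=m+1}^{2m} F_{nk+njq} ) converges, and its sum equals (1 / L_{mnq}) · Σ_{k=1}^{q} (−1)^{k−1} / ( Π_{j=0}^{2m−1} F_{nk+njq} ). -/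
open Filter Topology

lemma le_fib_succ : ∀ t : ℕ, t ≤ Nat.fib (t + 1) := by
  intro t
  induction t with
  | zero => simp
  | succ s ih =>
    rcases Nat.eq_zero_or_pos s with rfl | hs
    · simp
    · have h1 : 1 ≤ Nat.fib s := Nat.fib_pos.mpr hs
      rw [Nat.fib_add_two]; omega

lemma lucas_add_fib : ∀ t : ℕ, lucas t + Nat.fib t = 2 * Nat.fib (t + 1) := by
  have H : ∀ t : ℕ, (lucas t + Nat.fib t = 2 * Nat.fib (t + 1)) ∧
      (lucas (t + 1) + Nat.fib (t + 1) = 2 * Nat.fib (t + 2)) := by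
    intro t
    induction t with
    | zero => refine ⟨by simp [lucas], by simp [lucas]⟩
    | succ s ih =>
      refine ⟨ih.2, ?_⟩
      have e1 := ih.1
      have e2 := ih.2
      have f2 : Nat.fib (s + 1 + 1) = Nat.fib s + Nat.fib (s + 1) := Nat.fib_add_two
      have f3 : Nat.fib (s + 1 + 2) = Nat.fib (s + 1) + Nat.fib (s + 1 + 1) := Nat.fib_add_two
      have l2 : lucas (s + 1 + 1) = lucas (s + 1) + lucas s := rfl
      have eq1 : Nat.fib (s + 2) = Nat.fib (s + 1 + 1) := rfl
      omega
  exact fun t => (H t).1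

lemma lucas_pos (t : ℕ) : 0 < lucas t := by
  have h := lucas_add_fib t
  have h1 : Nat.fib t ≤ Nat.fib (t + 1) := Nat.fib_le_fib_succ
  have h2 : 1 ≤ Nat.fib (t + 1) := Nat.fib_pos.mpr (by omega)
  omega

lemma fib_cassini_even : ∀ s : ℕ, Nat.fib (2 * s + 1) ^ 2 =
    Nat.fib (2 * s + 1) * Nat.fib (2 * s) + Nat.fib (2 * s) ^ 2 + 1 := by
  intro s
  induction s with
  | zero => simp
  | succ s ih =>
    have f2 : Nat.fib (2 * s + 1 + 1) = Nat.fib (2 * s) + Nat.fib (2 * s + 1) := Nat.fib_add_two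
    have f3 : Nat.fib (2 * s + 1 + 2) = Nat.fib (2 * s + 1) + Nat.fib (2 * s + 1 + 1) :=
      Nat.fib_add_two
    rw [show 2 * (s + 1) + 1 = 2 * s + 1 + 2 by ring, show 2 * (s + 1) = 2 * s + 1 + 1 by ring,
      f3, f2]
    zify at ih ⊢
    linear_combination ih

lemma fib_lucas_key (t : ℕ) (ht : Even t) :
    ∀ x : ℕ, Nat.fib (x + 2 * t) + Nat.fib x = Nat.fib (x + t) * lucas t := by
  obtain ⟨s, rfl⟩ := ht
  rw [show s + s = 2 * s from (two_mul s).symm]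
  have hl : lucas (2 * s) + Nat.fib (2 * s) = 2 * Nat.fib (2 * s + 1) := lucas_add_fib (2 * s)
  have base0 : Nat.fib (0 + 2 * (2 * s)) + Nat.fib 0 = Nat.fib (0 + 2 * s) * lucas (2 * s) := by
    rw [Nat.zero_add, Nat.zero_add, Nat.fib_zero, Nat.add_zero,
      show 2 * (2 * s) = 2 * (2 * s) from rfl, Nat.fib_two_mul]
    have hle : Nat.fib (2 * s) ≤ Nat.fib (2 * s + 1) := Nat.fib_le_fib_succ
    have : lucas (2 * s) = 2 * Nat.fib (2 * s + 1) - Nat.fib (2 * s) := by omega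
    rw [this]
  have base1 : Nat.fib (1 + 2 * (2 * s)) + Nat.fib 1 = Nat.fib (1 + 2 * s) * lucas (2 * s) := by
    rw [show 1 + 2 * (2 * s) = 2 * (2 * s) + 1 by ring, Nat.fib_two_mul_add_one, Nat.fib_one,
      show 1 + 2 * s = 2 * s + 1 by ring]
    have hc := fib_cassini_even s
    zify at hc hl ⊢
    linear_combination (-(Nat.fib (2 * s + 1) : ℤ)) * hl - hc
  have H : ∀ x : ℕ,
      (Nat.fib (x + 2 * (2 * s)) + Nat.fib x = Nat.fib (x + 2 * s) * lucas (2 * s)) ∧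
      (Nat.fib (x + 1 + 2 * (2 * s)) + Nat.fib (x + 1) = Nat.fib (x + 1 + 2 * s) * lucas (2 * s)) := by
    intro x
    induction x with
    | zero => exact ⟨base0, base1⟩
    | succ x ih =>
      refine ⟨ih.2, ?_⟩
      have e1 : Nat.fib (x + 1 + 1 + 2 * (2 * s)) =
          Nat.fib (x + 2 * (2 * s)) + Nat.fib (x + 1 + 2 * (2 * s)) := by
        rw [show x + 1 + 1 + 2 * (2 * s) = x + 2 * (2 * s) + 2 by ring, Nat.fib_add_two]
        congr 1
        ring
      have e2 : Nat.fib (x + 1 + 1 + 2 * s) =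
          Nat.fib (x + 2 * s) + Nat.fib (x + 1 + 2 * s) := by
        rw [show x + 1 + 1 + 2 * s = x + 2 * s + 2 by ring, Nat.fib_add_two]
        congr 1
        ring
      have e3 : Nat.fib (x + 1 + 1) = Nat.fib x + Nat.fib (x + 1) := Nat.fib_add_two
      have h1 := ih.1
      have h2 := ih.2
      rw [e1, e2, e3]
      zify at h1 h2 ⊢
      linear_combination h1 + h2
  exact fun x => (H x).1

lemma key_frac (m n q : ℕ) (hm : 0 < m) (hn : 0 < n) (hnm : Even (n * m)) (k : ℕ) (hk : 1 ≤ k) :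
    1 / ((∏ j ∈ Finset.range m, (Nat.fib (n * k + n * j * q) : ℝ)) *
        ∏ j ∈ Finset.Icc (m + 1) (2 * m), (Nat.fib (n * k + n * j * q) : ℝ))
    = 1 / (lucas (m * n * q) : ℝ) *
      (1 / (∏ j ∈ Finset.range (2 * m), (Nat.fib (n * k + n * j * q) : ℝ)) +
       1 / (∏ j ∈ Finset.range (2 * m), (Nat.fib (n * (k + q) + n * j * q) : ℝ))) := by
  have hfibpos : ∀ x y : ℕ, 1 ≤ x → (0:ℝ) < (Nat.fib (n * x + n * y * q) : ℝ) := by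
    intro x y hx
    have hx' : 0 < n * x + n * y * q :=
      Nat.lt_of_lt_of_le (Nat.mul_pos hn hx) (Nat.le_add_right _ _)
    exact_mod_cast Nat.fib_pos.mpr hx'
  set b1 : ℝ := ∏ j ∈ Finset.range (2 * m), (Nat.fib (n * k + n * j * q) : ℝ) with hb1
  set b2 : ℝ := ∏ j ∈ Finset.range (2 * m), (Nat.fib (n * (k + q) + n * j * q) : ℝ) with hb2
  set d : ℝ := (∏ j ∈ Finset.range m, (Nat.fib (n * k + n * j * q) : ℝ)) *
      ∏ j ∈ Finset.Icc (m + 1) (2 * m), (Nat.fib (n * k + n * j * q) : ℝ) with hd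
  set M : ℝ := ∏ j ∈ Finset.range (2 * m - 1), (Nat.fib (n * k + n * (j + 1) * q) : ℝ) with hM
  set L : ℝ := (lucas (m * n * q) : ℝ) with hL
  have h2m : 2 * m = (2 * m - 1) + 1 := by omega
  have hb : b1 = M * (Nat.fib (n * k) : ℝ) := by
    rw [hb1, hM, h2m, Finset.prod_range_succ']
    norm_num
  have hb2' : b2 = M * (Nat.fib (n * k + n * (2 * m) * q) : ℝ) := by
    rw [hb2, hM]
    rw [Finset.prod_congr rfl (fun j _ => by
      show ((Nat.fib (n * (k + q) + n * j * q) : ℝ)) = (Nat.fib (n * k + n * (j + 1) * q) : ℝ)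
      congr 1
      ring)]
    rw [h2m, Finset.prod_range_succ, ← h2m]
  have hA : d * (Nat.fib (n * k + n * m * q) : ℝ) = b1 * (Nat.fib (n * k + n * (2 * m) * q) : ℝ) := by
    rw [hd, hb1]
    rw [show Finset.Icc (m + 1) (2 * m) = Finset.Ico (m + 1) (2 * m + 1) from
      (Finset.Ico_add_one_right_eq_Icc _ _)]
    rw [← Finset.prod_range_succ (fun j => (Nat.fib (n * k + n * j * q) : ℝ)) (2 * m)]
    rw [← Finset.prod_range_mul_prod_Ico (fun j => (Nat.fib (n * k + n * j * q) : ℝ))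
      (show m + 1 ≤ 2 * m + 1 by omega)]
    rw [Finset.prod_range_succ]
    ring
  have hB : (Nat.fib (n * k + n * (2 * m) * q) : ℝ) + (Nat.fib (n * k) : ℝ)
      = (Nat.fib (n * k + n * m * q) : ℝ) * L := by
    have heven : Even (n * m * q) := hnm.mul_right q
    have h := fib_lucas_key (n * m * q) heven (n * k)
    rw [show n * k + 2 * (n * m * q) = n * k + n * (2 * m) * q from by ring] at h
    rw [hL, show m * n * q = n * m * q from by ring]
    exact_mod_cast h
  have hb1pos : 0 < b1 := Finset.prod_pos fun j _ => hfibpos k j hk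
  have hb2pos : 0 < b2 := Finset.prod_pos fun j _ => hfibpos (k + q) j (by omega)
  have hdpos : 0 < d := mul_pos (Finset.prod_pos fun j _ => hfibpos k j hk)
    (Finset.prod_pos fun j _ => hfibpos k j hk)
  have hLpos : 0 < L := by
    rw [hL]; exact_mod_cast lucas_pos (m * n * q)
  have E : L * (b1 * b2) = d * (b1 + b2) := by
    rw [hb] at hA
    rw [hb, hb2']
    linear_combination (-(d * M)) * hB + (-(L * M)) * hA
  have hL0 : L ≠ 0 := ne_of_gt hLpos
  have hb10 : b1 ≠ 0 := ne_of_gt hb1pos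
  have hb20 : b2 ≠ 0 := ne_of_gt hb2pos
  have hd0 : d ≠ 0 := ne_of_gt hdpos
  field_simp
  linear_combination E

lemma telescope (q : ℕ) (hq : 0 < q) (a c : ℕ → ℝ) (L : ℝ)
    (hkey : ∀ k, 1 ≤ k → a k = 1 / L * (c k - c (k + q)))
    (hc : Tendsto c atTop (𝓝 0)) :
    Tendsto (fun N => ∑ k ∈ Finset.Icc 1 N, a k) atTop
      (𝓝 (1 / L * ∑ k ∈ Finset.Icc 1 q, c k)) := by
  have e0 : ∀ M : ℕ, Finset.Icc 1 M = Finset.Ioc 0 M := by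
    intro M; ext x; simp [Finset.mem_Icc, Finset.mem_Ioc]; omega
  have hsum : ∀ N, ∑ k ∈ Finset.Icc 1 N, a k
      = 1 / L * ∑ k ∈ Finset.Icc 1 q, c k - 1 / L * ∑ k ∈ Finset.Ioc N (N + q), c k := by
    intro N
    have h1 : ∀ k ∈ Finset.Icc 1 N, a k = 1 / L * (c k - c (k + q)) := fun k hk =>
      hkey k (Finset.mem_Icc.mp hk).1
    rw [Finset.sum_congr rfl h1, ← Finset.mul_sum, Finset.sum_sub_distrib]
    have h2 : ∑ k ∈ Finset.Icc 1 N, c (k + q) = ∑ k ∈ Finset.Ioc q (N + q), c k := by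
      have hmap : Finset.Ioc q (N + q) = (Finset.Icc 1 N).map (addRightEmbedding q) := by
        rw [Finset.map_add_right_Icc]; ext x; simp [Finset.mem_Icc, Finset.mem_Ioc]; omega
      rw [hmap, Finset.sum_map]
      simp [addRightEmbedding_apply]
    rw [h2, e0 N, e0 q]
    have hA : (∑ k ∈ Finset.Ioc 0 q, c k) + ∑ k ∈ Finset.Ioc q (N + q), c k
        = ∑ k ∈ Finset.Ioc 0 (N + q), c k :=
      Finset.sum_Ioc_consecutive _ (Nat.zero_le q) (Nat.le_add_left q N)
    have hB : (∑ k ∈ Finset.Ioc 0 N, c k) + ∑ k ∈ Finset.Ioc N (N + q), c k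
        = ∑ k ∈ Finset.Ioc 0 (N + q), c k :=
      Finset.sum_Ioc_consecutive _ (Nat.zero_le N) (Nat.le_add_right N q)
    linear_combination (1 / L) * hB - (1 / L) * hA
  have he : Tendsto (fun N => ∑ k ∈ Finset.Ioc N (N + q), c k) atTop (𝓝 0) := by
    have hrw : ∀ N : ℕ, ∑ k ∈ Finset.Ioc N (N + q), c k = ∑ i ∈ Finset.range q, c (N + 1 + i) := by
      intro N
      rw [show Finset.Ioc N (N + q) = Finset.Ico (N + 1) (N + q + 1) from by
        ext x; simp [Finset.mem_Ioc, Finset.mem_Ico], Finset.sum_Ico_eq_sum_range]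
      rw [show N + q + 1 - (N + 1) = q from by omega]
    have hterm : ∀ i : ℕ, Tendsto (fun N => c (N + 1 + i)) atTop (𝓝 0) := by
      intro i
      have : Tendsto (fun N : ℕ => N + 1 + i) atTop atTop := by
        have := tendsto_add_atTop_nat (1 + i)
        refine this.congr fun N => by omega
      exact hc.comp this
    have hts := tendsto_finset_sum (Finset.range q) (fun i _ => hterm i)
    rw [Finset.sum_const, smul_zero] at hts
    exact Tendsto.congr (fun N => (hrw N).symm) hts
  have hfin : Tendsto (fun N => 1 / L * ∑ k ∈ Finset.Icc 1 q, c k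
      - 1 / L * ∑ k ∈ Finset.Ioc N (N + q), c k) atTop
      (𝓝 (1 / L * ∑ k ∈ Finset.Icc 1 q, c k - 1 / L * 0)) :=
    tendsto_const_nhds.sub (tendsto_const_nhds.mul he)
  rw [mul_zero, sub_zero] at hfin
  exact Tendsto.congr (fun N => (hsum N).symm) hfin
/-- Theorem (`q` odd, `nm` even):
`Σ_{k=1}^{∞} (−1)^{k−1}/(Π_{j=0}^{m−1} F_{nk+njq} · Π_{j=m+1}^{2m} F_{nk+njq})
  = (1/L_{mnq}) Σ_{k=1}^{q} (−1)^{k−1}/(Π_{j=0}^{2m−1} F_{nk+njq})`. -/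
theorem stmt_6 (m n q : ℕ) (hm : 0 < m) (hn : 0 < n) (hq : 0 < q)
    (hqodd : Odd q) (hnm : Even (n * m)) :
    Tendsto (fun N => ∑ k ∈ Finset.Icc 1 N,
        (-1 : ℝ) ^ (k - 1) / ((∏ j ∈ Finset.range m, (Nat.fib (n * k + n * j * q) : ℝ)) *
          ∏ j ∈ Finset.Icc (m + 1) (2 * m), (Nat.fib (n * k + n * j * q) : ℝ)))
      atTop
      (𝓝 ((1 / (lucas (m * n * q) : ℝ)) *
        ∑ k ∈ Finset.Icc 1 q,
          (-1 : ℝ) ^ (k - 1) / ∏ j ∈ Finset.range (2 * m), (Nat.fib (n * k + n * j * q) : ℝ))) := by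
  have hkey : ∀ k, 1 ≤ k →
      (-1 : ℝ) ^ (k - 1) / ((∏ j ∈ Finset.range m, (Nat.fib (n * k + n * j * q) : ℝ)) *
          ∏ j ∈ Finset.Icc (m + 1) (2 * m), (Nat.fib (n * k + n * j * q) : ℝ))
      = 1 / (lucas (m * n * q) : ℝ) *
        ((-1 : ℝ) ^ (k - 1) / ∏ j ∈ Finset.range (2 * m), (Nat.fib (n * k + n * j * q) : ℝ)
         - (-1 : ℝ) ^ (k + q - 1) /
            ∏ j ∈ Finset.range (2 * m), (Nat.fib (n * (k + q) + n * j * q) : ℝ)) := by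
    intro k hk
    have hkf := key_frac m n q hm hn hnm k hk
    have hs : ((-1 : ℝ)) ^ (k + q - 1) = -(-1 : ℝ) ^ (k - 1) := by
      rw [show k + q - 1 = (k - 1) + q from by omega, pow_add, Odd.neg_one_pow hqodd]
      ring
    rw [hs, div_eq_mul_one_div, hkf]
    ring
  have hc : Tendsto (fun k =>
      (-1 : ℝ) ^ (k - 1) / ∏ j ∈ Finset.range (2 * m), (Nat.fib (n * k + n * j * q) : ℝ))
      atTop (𝓝 0) := by
    apply squeeze_zero_norm' (a := fun k : ℕ => 2 / (k : ℝ)) ?_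
      (tendsto_const_div_atTop_nhds_zero_nat 2)
    filter_upwards [eventually_ge_atTop 2] with k hk2
    have h1 : ∀ j ∈ Finset.range (2 * m), 1 ≤ Nat.fib (n * k + n * j * q) := by
      intro j _
      have hx : 0 < n * k + n * j * q :=
        Nat.lt_of_lt_of_le (Nat.mul_pos hn (by omega)) (Nat.le_add_right _ _)
      exact Nat.fib_pos.mpr hx
    have h0mem : 0 ∈ Finset.range (2 * m) := Finset.mem_range.mpr (by omega)
    have hsingleN : Nat.fib (n * k + n * 0 * q) ≤ ∏ j ∈ Finset.range (2 * m), Nat.fib (n * k + n * j * q) :=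
      Finset.single_le_prod' h1 h0mem
    have hsingle : (Nat.fib (n * k + n * 0 * q) : ℝ) ≤ ∏ j ∈ Finset.range (2 * m), (Nat.fib (n * k + n * j * q) : ℝ) := by
      exact_mod_cast hsingleN
    have hk2' : (2 : ℝ) ≤ (k : ℝ) := by exact_mod_cast hk2
    have hfib : (k : ℝ) / 2 ≤ (Nat.fib (n * k + n * 0 * q) : ℝ) := by
      rw [show n * k + n * 0 * q = n * k from by ring]
      have h3 : k - 1 ≤ Nat.fib (n * k) := by
        calc k - 1 ≤ Nat.fib (k - 1 + 1) := le_fib_succ (k - 1)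
          _ ≤ Nat.fib (n * k) := Nat.fib_mono (by
              have := Nat.le_mul_of_pos_left k hn
              omega)
      have h4 : ((k - 1 : ℕ) : ℝ) ≤ (Nat.fib (n * k) : ℝ) := by exact_mod_cast h3
      have h5 : ((k - 1 : ℕ) : ℝ) = (k : ℝ) - 1 := by
        have : 1 ≤ k := by omega
        push_cast [this]
        ring
      rw [h5] at h4
      linarith
    have hP : (k : ℝ) / 2 ≤ ∏ j ∈ Finset.range (2 * m), (Nat.fib (n * k + n * j * q) : ℝ) :=
      le_trans hfib hsingle
    have hk2pos : (0 : ℝ) < (k : ℝ) / 2 := by linarith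
    have hPpos : (0 : ℝ) < ∏ j ∈ Finset.range (2 * m), (Nat.fib (n * k + n * j * q) : ℝ) :=
      lt_of_lt_of_le hk2pos hP
    rw [norm_div, norm_pow, norm_neg, norm_one, one_pow, Real.norm_eq_abs, abs_of_pos hPpos]
    calc 1 / ∏ j ∈ Finset.range (2 * m), (Nat.fib (n * k + n * j * q) : ℝ)
        ≤ 1 / ((k : ℝ) / 2) := one_div_le_one_div_of_le hk2pos hP
      _ = 2 / (k : ℝ) := one_div_div _ _
  exact telescope q hq _ _ _ hkey hc
end

section
/- Let m, n, q, p be positive integers. Then the series Σ_{k=1}^{∞} (−1)^{nk−1} · ( Π_{j=1}^{m−1} F_{nk+jnq+np} ) / ( Π_{j=0}^{m} F_{nk+jnq} ) converges, and its sum equals φ^{mnp}·q / (F_{mnq}·F_{np}) − (1 / (F_{mnq}·F_{np})) · Σ_{k=1}^{q} Π_{j=0}^{m−1} ( F_{nk+jnq+np} / F_{nk+jnq} ), where φ = (1+√5)/2 is the golden ratio. -/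
open Filter Topology

lemma key_alg (a b c d e f2 P D1 D2 s : ℝ) (hD1 : D1 ≠ 0) (hD2 : D2 ≠ 0) (hb : b ≠ 0)
    (he : e ≠ 0) (hf2 : f2 ≠ 0)
    (hD : a * D2 = D1 * b) (vj : b * c - a * d = s * e * f2) :
    (-s) * P / (D1 * b) = (P * d / D2 - c * P / D1) / (e * f2) := by
  field_simp
  linear_combination (P * d) * hD + (P * D2) * vj

lemma vajda (a i j : ℕ) :
    (Nat.fib (a+i):ℝ) * Nat.fib (a+j) - Nat.fib a * Nat.fib (a+i+j)
      = (-1)^a * Nat.fib i * Nat.fib j := by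
  have h5 : Real.sqrt 5 ^ 2 = 5 := Real.sq_sqrt (by norm_num)
  have h5ne : Real.sqrt 5 ≠ 0 := by positivity
  have hm : Real.goldenRatio ^ a * Real.goldenConj ^ a = (-1:ℝ)^a := by
    rw [← mul_pow, Real.goldenRatio_mul_goldenConj]
  simp only [Real.coe_fib_eq, pow_add]
  generalize Real.goldenRatio ^ a = X at hm ⊢
  generalize Real.goldenConj ^ a = Y at hm ⊢
  generalize Real.goldenRatio ^ i = I1
  generalize Real.goldenConj ^ i = I2
  generalize Real.goldenRatio ^ j = J1
  generalize Real.goldenConj ^ j = J2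
  field_simp
  linear_combination ((I1-I2)*(J1-J2)) * hm

lemma fib_ratio_tendsto (c : ℕ) :
    Tendsto (fun k : ℕ => (Nat.fib (k + c) : ℝ) / Nat.fib k) atTop (𝓝 (Real.goldenRatio ^ c)) := by
  have hφ : (1:ℝ) < Real.goldenRatio := Real.one_lt_goldenRatio
  have hφ0 : (0:ℝ) < Real.goldenRatio := Real.goldenRatio_pos
  have hr : |Real.goldenConj / Real.goldenRatio| < 1 := by
    rw [abs_div, abs_of_pos hφ0, div_lt_one hφ0, abs_lt]
    constructor
    · nlinarith [Real.neg_one_lt_goldenConj]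
    · nlinarith [Real.goldenConj_neg]
  have h0 : Tendsto (fun k : ℕ => (Real.goldenConj / Real.goldenRatio) ^ k) atTop (𝓝 0) :=
    tendsto_pow_atTop_nhds_zero_of_abs_lt_one hr
  have hd : Tendsto (fun k : ℕ => 1 - (Real.goldenConj / Real.goldenRatio) ^ k) atTop (𝓝 (1:ℝ)) := by
    simpa using tendsto_const_nhds.sub h0
  have hn : Tendsto (fun k : ℕ =>
      Real.goldenRatio ^ c - Real.goldenConj ^ c * (Real.goldenConj / Real.goldenRatio) ^ k) atTop
      (𝓝 (Real.goldenRatio ^ c)) := by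
    simpa using tendsto_const_nhds.sub (h0.const_mul (Real.goldenConj ^ c))
  have hlim := hn.div hd one_ne_zero
  refine (by simpa using hlim : Tendsto _ atTop (𝓝 (Real.goldenRatio ^ c))).congr' ?_
  filter_upwards [eventually_ge_atTop 1] with k hk
  have hfib : (0:ℝ) < Nat.fib k := by exact_mod_cast Nat.fib_pos.mpr hk
  have hrk : (Real.goldenConj / Real.goldenRatio) ^ k ≠ 1 := by
    have h2 : |(Real.goldenConj / Real.goldenRatio) ^ k| < 1 := by
      rw [abs_pow]
      calc |Real.goldenConj / Real.goldenRatio| ^ k ≤ |Real.goldenConj / Real.goldenRatio| ^ 1 :=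
            pow_le_pow_of_le_one (abs_nonneg _) hr.le hk
        _ < 1 := by simpa using hr
    intro h; rw [h] at h2; simp at h2
  have h5ne : Real.sqrt 5 ≠ 0 := by positivity
  have hfibne : (Real.goldenRatio ^ k - Real.goldenConj ^ k) ≠ 0 := by
    intro h
    rw [Real.coe_fib_eq, h] at hfib
    simp at hfib
  rw [Real.coe_fib_eq, Real.coe_fib_eq]
  set G := Real.goldenRatio with hG
  set Gc := Real.goldenConj with hGc
  have hGne : G ≠ 0 := ne_of_gt hφ0
  have h1 : (1:ℝ) - (Gc/G)^k ≠ 0 := sub_ne_zero_of_ne (Ne.symm hrk)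
  simp only [Pi.div_apply]
  rw [eq_comm, div_eq_div_iff (div_ne_zero hfibne h5ne) h1]
  simp only [pow_add, div_pow]
  field_simp

lemma telescope_s8 (g : ℕ → ℝ) (q : ℕ) : ∀ N,
    ∑ i ∈ Finset.range N, (g (i + q) - g i)
      = ∑ i ∈ Finset.range q, g (N + i) - ∑ i ∈ Finset.range q, g i := by
  intro N
  induction N with
  | zero => simp
  | succ N ih =>
    rw [Finset.sum_range_succ, ih]
    have l1 : ∑ i ∈ Finset.range (q + 1), g (N + i)
        = ∑ i ∈ Finset.range q, g (N + 1 + i) + g N := by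
      rw [Finset.sum_range_succ']
      simp only [Nat.add_zero]
      congr 1
      exact Finset.sum_congr rfl fun i _ => by rw [show N + (i+1) = N + 1 + i by omega]
    have l2 : ∑ i ∈ Finset.range (q + 1), g (N + i)
        = ∑ i ∈ Finset.range q, g (N + i) + g (N + q) := Finset.sum_range_succ _ _
    have := l1.symm.trans l2
    linarith

lemma key_s8 (m n q p : ℕ) (hm : 0 < m) (hn : 0 < n) (hq : 0 < q) (hp : 0 < p) (k : ℕ) (hk : 1 ≤ k) :
    (-1 : ℝ) ^ (n * k - 1) *
        (∏ j ∈ Finset.Icc 1 (m - 1), (Nat.fib (n * k + j * n * q + n * p) : ℝ)) /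
        ∏ j ∈ Finset.range (m + 1), (Nat.fib (n * k + j * n * q) : ℝ)
    = ((∏ j ∈ Finset.range m,
          (Nat.fib (n * (k + q) + j * n * q + n * p) : ℝ) / (Nat.fib (n * (k + q) + j * n * q) : ℝ))
        - ∏ j ∈ Finset.range m,
          (Nat.fib (n * k + j * n * q + n * p) : ℝ) / (Nat.fib (n * k + j * n * q) : ℝ))
      / ((Nat.fib (m * n * q) : ℝ) * (Nat.fib (n * p) : ℝ)) := by
  have hfibpos : ∀ x : ℕ, 1 ≤ x → (0:ℝ) < Nat.fib x := fun x hx => by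
    exact_mod_cast Nat.fib_pos.mpr hx
  have hnk : 1 ≤ n * k := Nat.one_le_iff_ne_zero.mpr (by positivity)
  have e1 : ∀ j, n * (k + q) + j * n * q + n * p = n * k + (j + 1) * n * q + n * p :=
    fun j => by ring
  have e2 : ∀ j, n * (k + q) + j * n * q = n * k + (j + 1) * n * q := fun j => by ring
  have hIcc : Finset.Icc 1 (m - 1) = Finset.Ico 1 m := by
    rw [← Finset.Ico_add_one_right_eq_Icc]; congr 1; omega
  simp only [e1, e2, Finset.prod_div_distrib, hIcc]
  have shiftprod : ∀ F : ℕ → ℕ,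
      ∏ j ∈ Finset.range m, (Nat.fib (F (j + 1)) : ℝ)
        = ∏ j ∈ Finset.Ico 1 (m + 1), (Nat.fib (F j) : ℝ) := by
    intro F
    rw [Finset.prod_Ico_eq_prod_range]
    simp only [Nat.add_sub_cancel]
    exact Finset.prod_congr rfl fun j _ => by rw [Nat.add_comm 1 j]
  have hN2 : ∏ j ∈ Finset.range m, (Nat.fib (n * k + (j + 1) * n * q + n * p) : ℝ)
      = (∏ j ∈ Finset.Ico 1 m, (Nat.fib (n * k + j * n * q + n * p) : ℝ))
        * (Nat.fib (n * k + m * n * q + n * p) : ℝ) := by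
    rw [← Finset.prod_Ico_succ_top (by omega : 1 ≤ m)]
    exact shiftprod (fun j => n * k + j * n * q + n * p)
  have hD2 : ∏ j ∈ Finset.range m, (Nat.fib (n * k + (j + 1) * n * q) : ℝ)
      = ∏ j ∈ Finset.Ico 1 (m + 1), (Nat.fib (n * k + j * n * q) : ℝ) :=
    shiftprod (fun j => n * k + j * n * q)
  have hbot : ∀ F : ℕ → ℕ, ∏ j ∈ Finset.range m, (Nat.fib (F j) : ℝ)
      = (Nat.fib (F 0) : ℝ) * ∏ j ∈ Finset.Ico 1 m, (Nat.fib (F j) : ℝ) := by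
    intro F
    rw [Finset.range_eq_Ico, Finset.prod_eq_prod_Ico_succ_bot hm]
  have hN1 : ∏ j ∈ Finset.range m, (Nat.fib (n * k + j * n * q + n * p) : ℝ)
      = (Nat.fib (n * k + n * p) : ℝ)
        * ∏ j ∈ Finset.Ico 1 m, (Nat.fib (n * k + j * n * q + n * p) : ℝ) := by
    have := hbot (fun j => n * k + j * n * q + n * p)
    simpa using this
  have hD1 : ∏ j ∈ Finset.range (m + 1), (Nat.fib (n * k + j * n * q) : ℝ)
      = (∏ j ∈ Finset.range m, (Nat.fib (n * k + j * n * q) : ℝ))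
        * (Nat.fib (n * k + m * n * q) : ℝ) := by
    rw [Finset.prod_range_succ]
  have hD1' : ∏ j ∈ Finset.range (m + 1), (Nat.fib (n * k + j * n * q) : ℝ)
      = (Nat.fib (n * k) : ℝ)
        * ∏ j ∈ Finset.Ico 1 (m + 1), (Nat.fib (n * k + j * n * q) : ℝ) := by
    rw [Finset.range_eq_Ico, Finset.prod_eq_prod_Ico_succ_bot (by omega : 0 < m + 1)]
    simp
  rw [hN2, hD2, hN1, hD1]
  have hD1ne : (∏ j ∈ Finset.range m, (Nat.fib (n * k + j * n * q) : ℝ)) ≠ 0 := by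
    apply ne_of_gt
    apply Finset.prod_pos
    intro j _
    exact hfibpos _ (by omega)
  have hD2ne : (∏ j ∈ Finset.Ico 1 (m + 1), (Nat.fib (n * k + j * n * q) : ℝ)) ≠ 0 := by
    apply ne_of_gt
    apply Finset.prod_pos
    intro j _
    exact hfibpos _ (by omega)
  have hbne : (Nat.fib (n * k + m * n * q) : ℝ) ≠ 0 := ne_of_gt (hfibpos _ (by omega))
  have hene : (Nat.fib (m * n * q) : ℝ) ≠ 0 :=
    ne_of_gt (hfibpos _ (Nat.one_le_iff_ne_zero.mpr (by positivity)))
  have hf2ne : (Nat.fib (n * p) : ℝ) ≠ 0 :=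
    ne_of_gt (hfibpos _ (Nat.one_le_iff_ne_zero.mpr (by positivity)))
  have hsign : (-1 : ℝ) ^ (n * k - 1) = -(-1 : ℝ) ^ (n * k) := by
    obtain ⟨t, ht⟩ : ∃ t, n * k = t + 1 := ⟨n * k - 1, by omega⟩
    rw [ht]
    simp [pow_succ]
  rw [hsign]
  have hD : (Nat.fib (n * k) : ℝ)
        * (∏ j ∈ Finset.Ico 1 (m + 1), (Nat.fib (n * k + j * n * q) : ℝ))
      = (∏ j ∈ Finset.range m, (Nat.fib (n * k + j * n * q) : ℝ))
        * (Nat.fib (n * k + m * n * q) : ℝ) := by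
    rw [← hD1', hD1]
  have vj : (Nat.fib (n * k + m * n * q) : ℝ) * (Nat.fib (n * k + n * p) : ℝ)
      - (Nat.fib (n * k) : ℝ) * (Nat.fib (n * k + m * n * q + n * p) : ℝ)
      = (-1 : ℝ) ^ (n * k) * (Nat.fib (m * n * q) : ℝ) * (Nat.fib (n * p) : ℝ) :=
    vajda (n * k) (m * n * q) (n * p)
  exact key_alg _ _ _ _ _ _ _ _ _ _ hD1ne hD2ne hbne hene hf2ne hD vj

noncomputable def Afun (m n q p : ℕ) : ℕ → ℝ := fun k =>
  ∏ j ∈ Finset.range m,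
    (Nat.fib (n * k + j * n * q + n * p) : ℝ) / (Nat.fib (n * k + j * n * q) : ℝ)

lemma Afun_tendsto (m n q p : ℕ) (hn : 0 < n) :
    Tendsto (Afun m n q p) atTop (𝓝 (Real.goldenRatio ^ (m * n * p))) := by
  have hlim : ∀ j : ℕ, Tendsto (fun k =>
      (Nat.fib (n * k + j * n * q + n * p) : ℝ) / (Nat.fib (n * k + j * n * q) : ℝ))
      atTop (𝓝 (Real.goldenRatio ^ (n * p))) := by
    intro j
    have hinner : Tendsto (fun k : ℕ => n * k + j * n * q) atTop atTop := by
      apply tendsto_atTop_mono (fun k => ?_) tendsto_id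
      have : k ≤ n * k := Nat.le_mul_of_pos_left k hn
      simp only [id_eq]
      omega
    exact (fib_ratio_tendsto (n * p)).comp hinner
  have := tendsto_finset_prod (Finset.range m)
    (fun j (_ : j ∈ Finset.range m) => hlim j)
  simp only [Finset.prod_const, Finset.card_range] at this
  have hpow : (Real.goldenRatio ^ (n * p)) ^ m = Real.goldenRatio ^ (m * n * p) := by
    rw [← pow_mul]
    ring_nf
  rw [hpow] at this
  exact this

/-- Theorem (general alternating sum with shifted Fibonacci numerators):
`Σ_{k=1}^{∞} (−1)^{nk−1} (Π_{j=1}^{m−1} F_{nk+jnq+np}) / (Π_{j=0}^{m} F_{nk+jnq})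
  = φ^{mnp} q/(F_{mnq} F_{np}) − (1/(F_{mnq} F_{np})) Σ_{k=1}^{q} Π_{j=0}^{m−1} F_{nk+jnq+np}/F_{nk+jnq}`,
where `φ = (1+√5)/2`. -/
theorem stmt_8 (m n q p : ℕ) (hm : 0 < m) (hn : 0 < n) (hq : 0 < q) (hp : 0 < p) :
    Tendsto (fun N => ∑ k ∈ Finset.Icc 1 N,
        (-1 : ℝ) ^ (n * k - 1) *
          (∏ j ∈ Finset.Icc 1 (m - 1), (Nat.fib (n * k + j * n * q + n * p) : ℝ)) /
          ∏ j ∈ Finset.range (m + 1), (Nat.fib (n * k + j * n * q) : ℝ))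
      atTop
      (𝓝 (((1 + Real.sqrt 5) / 2) ^ (m * n * p) * (q : ℝ) /
          ((Nat.fib (m * n * q) : ℝ) * (Nat.fib (n * p) : ℝ))
        - (1 / ((Nat.fib (m * n * q) : ℝ) * (Nat.fib (n * p) : ℝ))) *
          ∑ k ∈ Finset.Icc 1 q, ∏ j ∈ Finset.range m,
            (Nat.fib (n * k + j * n * q + n * p) : ℝ) / (Nat.fib (n * k + j * n * q) : ℝ))) := by
  set C : ℝ := (Nat.fib (m * n * q) : ℝ) * (Nat.fib (n * p) : ℝ) with hC_def
  set A : ℕ → ℝ := Afun m n q p with hA_def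
  -- each partial sum equals telescoped form
  have hsum : ∀ N, (∑ k ∈ Finset.Icc 1 N,
      (-1 : ℝ) ^ (n * k - 1) *
        (∏ j ∈ Finset.Icc 1 (m - 1), (Nat.fib (n * k + j * n * q + n * p) : ℝ)) /
        ∏ j ∈ Finset.range (m + 1), (Nat.fib (n * k + j * n * q) : ℝ))
      = ∑ i ∈ Finset.range q, A (N + i + 1) / C - ∑ i ∈ Finset.range q, A (i + 1) / C := by
    intro N
    have step1 : ∀ k ∈ Finset.Icc 1 N,
        (-1 : ℝ) ^ (n * k - 1) *
          (∏ j ∈ Finset.Icc 1 (m - 1), (Nat.fib (n * k + j * n * q + n * p) : ℝ)) /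
          ∏ j ∈ Finset.range (m + 1), (Nat.fib (n * k + j * n * q) : ℝ)
        = (A (k + q) - A k) / C := by
      intro k hk
      rw [Finset.mem_Icc] at hk
      rw [hA_def, hC_def]
      simp only [Afun]
      exact key_s8 m n q p hm hn hq hp k hk.1
    rw [Finset.sum_congr rfl step1]
    rw [← Finset.Ico_add_one_right_eq_Icc, Finset.sum_Ico_eq_sum_range]
    calc ∑ i ∈ Finset.range N, (A (1 + i + q) - A (1 + i)) / C
        = ∑ i ∈ Finset.range N, ((fun i => A (i + 1) / C) (i + q)
            - (fun i => A (i + 1) / C) i) := by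
          refine Finset.sum_congr rfl fun i _ => ?_
          show (A (1 + i + q) - A (1 + i)) / C = A (i + q + 1) / C - A (i + 1) / C
          rw [show 1 + i + q = i + q + 1 by omega, show 1 + i = i + 1 by omega, sub_div]
      _ = ∑ i ∈ Finset.range q, (fun i => A (i + 1) / C) (N + i)
            - ∑ i ∈ Finset.range q, (fun i => A (i + 1) / C) i :=
          telescope_s8 (fun i => A (i + 1) / C) q N
      _ = ∑ i ∈ Finset.range q, A (N + i + 1) / C - ∑ i ∈ Finset.range q, A (i + 1) / C := by
          congr 1
  -- limits
  have hA : Tendsto A atTop (𝓝 (Real.goldenRatio ^ (m * n * p))) := Afun_tendsto m n q p hn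
  have hT1 : Tendsto (fun N => ∑ i ∈ Finset.range q, A (N + i + 1) / C) atTop
      (𝓝 (∑ _i ∈ Finset.range q, Real.goldenRatio ^ (m * n * p) / C)) := by
    apply tendsto_finset_sum
    intro i _
    have hcomp : Tendsto (fun N : ℕ => A (N + (i + 1))) atTop
        (𝓝 (Real.goldenRatio ^ (m * n * p))) :=
      hA.comp (tendsto_add_atTop_nat (i + 1))
    have : Tendsto (fun N : ℕ => A (N + i + 1)) atTop (𝓝 (Real.goldenRatio ^ (m * n * p))) := by
      refine hcomp.congr fun N => ?_
      rw [Nat.add_assoc]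
    exact this.div_const C
  have hT : Tendsto (fun N => ∑ i ∈ Finset.range q, A (N + i + 1) / C
      - ∑ i ∈ Finset.range q, A (i + 1) / C) atTop
      (𝓝 (∑ _i ∈ Finset.range q, Real.goldenRatio ^ (m * n * p) / C
        - ∑ i ∈ Finset.range q, A (i + 1) / C)) :=
    hT1.sub tendsto_const_nhds
  have final := hT.congr fun N => (hsum N).symm
  have hgold : Real.goldenRatio = (1 + Real.sqrt 5) / 2 := rfl
  have hpt : ((1 + Real.sqrt 5) / 2) ^ (m * n * p) * (q : ℝ) / C
      - 1 / C * ∑ k ∈ Finset.Icc 1 q, ∏ j ∈ Finset.range m,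
          (Nat.fib (n * k + j * n * q + n * p) : ℝ) / (Nat.fib (n * k + j * n * q) : ℝ)
      = ∑ _i ∈ Finset.range q, Real.goldenRatio ^ (m * n * p) / C
        - ∑ i ∈ Finset.range q, A (i + 1) / C := by
    have h1 : ∑ k ∈ Finset.Icc 1 q, ∏ j ∈ Finset.range m,
        (Nat.fib (n * k + j * n * q + n * p) : ℝ) / (Nat.fib (n * k + j * n * q) : ℝ)
        = ∑ i ∈ Finset.range q, A (i + 1) := by
      rw [← Finset.Ico_add_one_right_eq_Icc, Finset.sum_Ico_eq_sum_range]
      refine Finset.sum_congr rfl fun i _ => ?_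
      rw [hA_def]
      show _ = ∏ j ∈ Finset.range m,
        (Nat.fib (n * (i + 1) + j * n * q + n * p) : ℝ) / (Nat.fib (n * (i + 1) + j * n * q) : ℝ)
      rw [Nat.add_comm 1 i]
    rw [h1, Finset.sum_const, Finset.card_range, nsmul_eq_mul, hgold, ← Finset.sum_div]
    ring
  rw [hpt]
  exact final
end
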